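/- The integral ternary quadratic forms q₁(x,y,z) = 2y² - 10xy + 40z² and q₂(x,y,z) = 8y² - 10xy + 40z² (with Gram matrices [[0,-5,0],[-5,2,0],[0,0,40]] and [[0,-5,0],[-5,8,0],[0,0,40]] respectively) are not equivalent over ℤ: there is no ℤ-linear automorphism T of ℤ³ such that q₂(T(v)) = q₁(v) for all v ∈ ℤ³. -/

import Mathlib

lemma zmod5_two_not_sq : ¬IsSquare (2 : ZMod 5) := by decide

lemma zmod5_three_not_sq : ¬IsSquare (3 : ZMod 5) := by decide

/-- The form `q₂` does not represent `2` over `ℤ`. -/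
lemma q2_not_rep_two (a b c : ℤ) : 8 * b ^ 2 - 10 * a * b + 40 * c ^ 2 ≠ 2 := by
  intro h
  have h1 : 4 * b ^ 2 - 5 * (a * b) + 20 * c ^ 2 = 1 := by linarith
  -- b is odd
  have h2 : 5 * (a * b) = 2 * (2 * b ^ 2 + 10 * c ^ 2) - 1 := by linarith
  have hab : Odd (a * b) := by
    have h5ab : Odd (5 * (a * b)) := by
      rw [h2]; exact Even.sub_odd (even_two_mul _) odd_one
    exact (Int.odd_mul.mp h5ab).2
  have hbodd : Odd b := (Int.odd_mul.mp hab).2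
  -- b ≡ ±2 mod 5
  have h5 : ((4 * b ^ 2 - 5 * (a * b) + 20 * c ^ 2 : ℤ) : ZMod 5) = ((1 : ℤ) : ZMod 5) := by
    rw [h1]
  push_cast at h5
  have hb5 : (b : ZMod 5) = 2 ∨ (b : ZMod 5) = 3 := by
    have key : ∀ x y z : ZMod 5, 4 * x ^ 2 - 5 * (y * x) + 20 * z ^ 2 = 1 → x = 2 ∨ x = 3 := by
      decide
    exact key _ _ _ h5
  set n : ℕ := b.natAbs with hn
  have hnodd : Odd n := Int.natAbs_odd.mpr hbodd
  have hn5 : (n : ZMod 5) = 2 ∨ (n : ZMod 5) = 3 := by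
    have hcast : ((n : ℤ) : ZMod 5) = (n : ZMod 5) := by push_cast; ring
    rcases Int.natAbs_eq b with he | he
    · rw [← hcast, ← he]; exact hb5
    · have : ((n : ℤ) : ZMod 5) = -(b : ZMod 5) := by
        rw [show ((n : ℤ) : ZMod 5) = -((- (n : ℤ) : ℤ) : ZMod 5) by push_cast; ring, ← he]
      rw [← hcast, this]
      rcases hb5 with hb | hb <;> rw [hb] <;> [right; left] <;> decide
  -- 5 is a square mod n
  have hdvd : (b : ℤ) ∣ (10 * c) ^ 2 - 5 := ⟨5 * (5 * a - 4 * b), by linear_combination 5 * h1⟩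
  have hsq : IsSquare ((5 : ℤ) : ZMod n) := by
    have h0 : (((10 * c) ^ 2 - 5 : ℤ) : ZMod n) = 0 :=
      (ZMod.intCast_zmod_eq_zero_iff_dvd _ n).mpr (Int.natAbs_dvd.mpr hdvd)
    push_cast at h0
    exact ⟨10 * (c : ZMod n), by rw [← sq]; linear_combination -h0⟩
  -- gcd condition
  have hn50 : (n : ZMod 5) ≠ 0 := by rcases hn5 with h | h <;> rw [h] <;> decide
  have hndvd : ¬ (5 ∣ n) := fun hd => hn50 ((ZMod.natCast_eq_zero_iff n 5).mpr hd)
  have hgcd : Int.gcd 5 n = 1 := by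
    have : Nat.Coprime 5 n := (by norm_num : Nat.Prime 5).coprime_iff_not_dvd.mpr hndvd
    simpa [Int.gcd] using this
  -- Jacobi symbol computation
  have hJ1 : jacobiSym 5 n = 1 := by
    rcases jacobiSym.eq_one_or_neg_one hgcd with h' | h'
    · exact h'
    · exact absurd hsq (ZMod.nonsquare_of_jacobiSym_eq_neg_one h')
  haveI : Fact (Nat.Prime 5) := ⟨by norm_num⟩
  have hJ2 : jacobiSym (n : ℤ) 5 = -1 := by
    rw [ZMod.nonsquare_iff_jacobiSym_eq_neg_one]
    have hcast : ((n : ℤ) : ZMod 5) = (n : ZMod 5) := by push_cast; ring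
    rw [hcast]
    rcases hn5 with h' | h' <;> rw [h']
    · exact zmod5_two_not_sq
    · exact zmod5_three_not_sq
  have hrec : jacobiSym ((5 : ℕ) : ℤ) n = jacobiSym ((n : ℕ) : ℤ) 5 :=
    jacobiSym.quadratic_reciprocity_one_mod_four (by norm_num) hnodd
  norm_num at hrec
  rw [hJ1, hJ2] at hrec
  norm_num at hrec

/-- The integral ternary quadratic forms `q₁(x,y,z) = 2y² - 10xy + 40z²` and
`q₂(x,y,z) = 8y² - 10xy + 40z²` (with Gram matrices `[[0,-5,0],[-5,2,0],[0,0,40]]`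
and `[[0,-5,0],[-5,8,0],[0,0,40]]`) are not equivalent over `ℤ`. -/
theorem ternary_forms_not_equivalent :
    ¬ ∃ T : (Fin 3 → ℤ) ≃ₗ[ℤ] (Fin 3 → ℤ),
      ∀ v : Fin 3 → ℤ,
        8 * (T v 1) ^ 2 - 10 * (T v 0) * (T v 1) + 40 * (T v 2) ^ 2 =
          2 * (v 1) ^ 2 - 10 * (v 0) * (v 1) + 40 * (v 2) ^ 2 := by
  rintro ⟨T, hT⟩
  have h := hT ![0, 1, 0]
  simp [Matrix.cons_val_zero, Matrix.cons_val_one, Matrix.head_cons] at h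
  exact q2_not_rep_two (T ![0, 1, 0] 0) (T ![0, 1, 0] 1) (T ![0, 1, 0] 2) (by linarith)
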